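/- Let s ∈ ℝ, σ > 0, and 0 < δ' < δ. Then for every f in the Gevrey space G^δ_{σ,s}(ℝ), the derivative satisfies ‖∂_x f‖_{G^{δ'}_{σ,s}} ≤ (e^{-σ} σ^σ / (δ - δ')^σ) · ‖f‖_{G^δ_{σ,s}}, where ‖f‖_{G^δ_{σ,s}} = ( ∫ (1+|ξ|^2)^s e^{2δ(1+|ξ|^2)^{1/(2σ)}} |f̂(ξ)|^2 dξ )^{1/2}. -/

import Mathlib

open MeasureTheory

/-- key scalar bound: u^σ ≤ σ^σ e^{-σ} e^u for u>0 -/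
lemma key_rpow (σ u : ℝ) (hσ : 0 < σ) (hu : 0 < u) :
    u ^ σ ≤ σ ^ σ * Real.exp (-σ) * Real.exp u := by
  have hlog : Real.log (u / σ) ≤ u / σ - 1 := Real.log_le_sub_one_of_pos (by positivity)
  rw [Real.log_div hu.ne' hσ.ne'] at hlog
  have h1 : σ * Real.log u ≤ σ * Real.log σ - σ + u := by
    have := mul_le_mul_of_nonneg_left hlog hσ.le
    have hσu : σ * (u / σ - 1) = u - σ := by field_simp
    nlinarith
  rw [Real.rpow_def_of_pos hu, Real.rpow_def_of_pos hσ, ← Real.exp_add, ← Real.exp_add]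
  exact Real.exp_le_exp.2 (by linarith)

lemma pointwise_bound (σ δ δ' : ℝ) (hσ : 0 < σ) (hδ' : 0 < δ') (hδ : δ' < δ) (ξ : ℝ) :
    |ξ| * Real.exp (δ' * (1 + |ξ| ^ 2) ^ (1 / (2 * σ))) ≤
      Real.exp (-σ) * σ ^ σ / (δ - δ') ^ σ *
        Real.exp (δ * (1 + |ξ| ^ 2) ^ (1 / (2 * σ))) := by
  set Λ : ℝ := (1 + |ξ| ^ 2) ^ (1 / (2 * σ)) with hΛ
  have hbase : (0:ℝ) < 1 + |ξ| ^ 2 := by positivity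
  have hΛpos : 0 < Λ := Real.rpow_pos_of_pos hbase _
  have ha : (0:ℝ) < δ - δ' := by linarith
  -- |ξ| ≤ Λ ^ σ
  have h1 : |ξ| ≤ Λ ^ σ := by
    have : Λ ^ σ = (1 + |ξ| ^ 2) ^ ((1 / (2 * σ)) * σ) := by
      rw [hΛ, ← Real.rpow_mul hbase.le]
    rw [this]
    have he : (1 / (2 * σ)) * σ = 1 / 2 := by field_simp
    rw [he, ← Real.sqrt_eq_rpow]
    have := Real.sqrt_le_sqrt (show |ξ| ^ 2 ≤ 1 + |ξ| ^ 2 by linarith)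
    calc |ξ| = Real.sqrt (|ξ| ^ 2) := by
              rw [Real.sqrt_sq_eq_abs, abs_abs]
      _ ≤ _ := this
  -- Λ ^ σ ≤ C e^{(δ-δ')Λ}
  have h2 : Λ ^ σ ≤ Real.exp (-σ) * σ ^ σ / (δ - δ') ^ σ * Real.exp ((δ - δ') * Λ) := by
    have hk := key_rpow σ ((δ - δ') * Λ) hσ (by positivity)
    rw [Real.mul_rpow ha.le hΛpos.le] at hk
    rw [div_mul_eq_mul_div, le_div_iff₀ (by positivity)]
    nlinarith [Real.rpow_pos_of_pos ha σ]
  calc |ξ| * Real.exp (δ' * Λ) ≤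
      (Real.exp (-σ) * σ ^ σ / (δ - δ') ^ σ * Real.exp ((δ - δ') * Λ)) * Real.exp (δ' * Λ) := by
        exact mul_le_mul_of_nonneg_right (h1.trans h2) (Real.exp_nonneg _)
    _ = Real.exp (-σ) * σ ^ σ / (δ - δ') ^ σ * Real.exp (δ * Λ) := by
        rw [mul_assoc, ← Real.exp_add]; ring_nf

/-- The Gevrey norm `‖f‖_{G^δ_{σ,s}}`, expressed through the Fourier transform `f̂` of `f`
(with the convention that the Fourier transform of `∂ₓ f` is `ξ ↦ i ξ f̂(ξ)`). -/
noncomputable def gevreyNorm (δ σ s : ℝ) (fhat : ℝ → ℂ) : ℝ :=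
  (∫ ξ : ℝ, (1 + |ξ| ^ 2) ^ s * Real.exp (2 * δ * (1 + |ξ| ^ 2) ^ (1 / (2 * σ))) *
      ‖fhat ξ‖ ^ 2) ^ ((1 : ℝ) / 2)

theorem gevrey_gradient_estimate (s σ δ δ' : ℝ) (hσ : 0 < σ) (hδ' : 0 < δ') (hδ : δ' < δ)
    (fhat : ℝ → ℂ)
    (hint : Integrable (fun ξ : ℝ => (1 + |ξ| ^ 2) ^ s *
      Real.exp (2 * δ * (1 + |ξ| ^ 2) ^ (1 / (2 * σ))) * ‖fhat ξ‖ ^ 2)) :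
    gevreyNorm δ' σ s (fun ξ => Complex.I * (ξ : ℂ) * fhat ξ) ≤
      Real.exp (-σ) * σ ^ σ / (δ - δ') ^ σ * gevreyNorm δ σ s fhat := by
  set C : ℝ := Real.exp (-σ) * σ ^ σ / (δ - δ') ^ σ with hC
  have ha : (0:ℝ) < δ - δ' := by linarith
  have hCpos : 0 < C := by
    rw [hC]
    positivity
  -- pointwise bound on integrands
  have hpt : ∀ ξ : ℝ, (1 + |ξ| ^ 2) ^ s * Real.exp (2 * δ' * (1 + |ξ| ^ 2) ^ (1 / (2 * σ))) *
      ‖Complex.I * (ξ : ℂ) * fhat ξ‖ ^ 2 ≤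
      C ^ 2 * ((1 + |ξ| ^ 2) ^ s * Real.exp (2 * δ * (1 + |ξ| ^ 2) ^ (1 / (2 * σ))) *
        ‖fhat ξ‖ ^ 2) := by
    intro ξ
    set Λ : ℝ := (1 + |ξ| ^ 2) ^ (1 / (2 * σ)) with hΛ
    have hn : ‖Complex.I * (ξ : ℂ) * fhat ξ‖ = |ξ| * ‖fhat ξ‖ := by
      simp
    have key := pointwise_bound σ δ δ' hσ hδ' hδ ξ
    have sq : (|ξ| * Real.exp (δ' * Λ)) ^ 2 ≤ (C * Real.exp (δ * Λ)) ^ 2 := by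
      apply pow_le_pow_left₀ (by positivity) key
    have e1 : Real.exp (δ' * Λ) ^ 2 = Real.exp (2 * δ' * Λ) := by
      rw [← Real.exp_nat_mul]; ring_nf
    have e2 : Real.exp (δ * Λ) ^ 2 = Real.exp (2 * δ * Λ) := by
      rw [← Real.exp_nat_mul]; ring_nf
    have hsq : |ξ| ^ 2 * Real.exp (2 * δ' * Λ) ≤ C ^ 2 * Real.exp (2 * δ * Λ) := by
      calc |ξ| ^ 2 * Real.exp (2 * δ' * Λ) = (|ξ| * Real.exp (δ' * Λ)) ^ 2 := by
            rw [mul_pow, e1]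
        _ ≤ (C * Real.exp (δ * Λ)) ^ 2 := sq
        _ = C ^ 2 * Real.exp (2 * δ * Λ) := by rw [mul_pow, e2]
    rw [hn, mul_pow]
    have hnn : (0:ℝ) ≤ (1 + |ξ| ^ 2) ^ s * ‖fhat ξ‖ ^ 2 := by positivity
    calc (1 + |ξ| ^ 2) ^ s * Real.exp (2 * δ' * Λ) * (|ξ| ^ 2 * ‖fhat ξ‖ ^ 2)
        = ((1 + |ξ| ^ 2) ^ s * ‖fhat ξ‖ ^ 2) * (|ξ| ^ 2 * Real.exp (2 * δ' * Λ)) := by ring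
      _ ≤ ((1 + |ξ| ^ 2) ^ s * ‖fhat ξ‖ ^ 2) * (C ^ 2 * Real.exp (2 * δ * Λ)) :=
            mul_le_mul_of_nonneg_left hsq hnn
      _ = C ^ 2 * ((1 + |ξ| ^ 2) ^ s * Real.exp (2 * δ * Λ) * ‖fhat ξ‖ ^ 2) := by ring
  -- integral comparison
  have hint2 : Integrable (fun ξ : ℝ => C ^ 2 * ((1 + |ξ| ^ 2) ^ s *
      Real.exp (2 * δ * (1 + |ξ| ^ 2) ^ (1 / (2 * σ))) * ‖fhat ξ‖ ^ 2)) := hint.const_mul _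
  have hmono : (∫ ξ : ℝ, (1 + |ξ| ^ 2) ^ s *
        Real.exp (2 * δ' * (1 + |ξ| ^ 2) ^ (1 / (2 * σ))) *
        ‖Complex.I * (ξ : ℂ) * fhat ξ‖ ^ 2) ≤
      ∫ ξ : ℝ, C ^ 2 * ((1 + |ξ| ^ 2) ^ s *
        Real.exp (2 * δ * (1 + |ξ| ^ 2) ^ (1 / (2 * σ))) * ‖fhat ξ‖ ^ 2) := by
    apply integral_mono_of_nonneg
    · filter_upwards with ξ
      positivity
    · exact hint2
    · filter_upwards with ξ using hpt ξ
  have hIn : (0:ℝ) ≤ ∫ ξ : ℝ, (1 + |ξ| ^ 2) ^ s *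
      Real.exp (2 * δ' * (1 + |ξ| ^ 2) ^ (1 / (2 * σ))) *
      ‖Complex.I * (ξ : ℂ) * fhat ξ‖ ^ 2 := by
    apply integral_nonneg
    intro ξ
    positivity
  have hId : (0:ℝ) ≤ ∫ ξ : ℝ, (1 + |ξ| ^ 2) ^ s *
      Real.exp (2 * δ * (1 + |ξ| ^ 2) ^ (1 / (2 * σ))) * ‖fhat ξ‖ ^ 2 := by
    apply integral_nonneg
    intro ξ
    positivity
  rw [gevreyNorm, gevreyNorm]
  rw [integral_const_mul] at hmono
  calc (∫ ξ : ℝ, (1 + |ξ| ^ 2) ^ s *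
        Real.exp (2 * δ' * (1 + |ξ| ^ 2) ^ (1 / (2 * σ))) *
        ‖Complex.I * (ξ : ℂ) * fhat ξ‖ ^ 2) ^ ((1:ℝ)/2)
      ≤ (C ^ 2 * ∫ ξ : ℝ, (1 + |ξ| ^ 2) ^ s *
        Real.exp (2 * δ * (1 + |ξ| ^ 2) ^ (1 / (2 * σ))) * ‖fhat ξ‖ ^ 2) ^ ((1:ℝ)/2) :=
        Real.rpow_le_rpow hIn hmono (by norm_num)
    _ = C * (∫ ξ : ℝ, (1 + |ξ| ^ 2) ^ s *
        Real.exp (2 * δ * (1 + |ξ| ^ 2) ^ (1 / (2 * σ))) * ‖fhat ξ‖ ^ 2) ^ ((1:ℝ)/2) := by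
        rw [Real.mul_rpow (by positivity) hId]
        congr 1
        rw [← Real.rpow_natCast C 2, ← Real.rpow_mul hCpos.le]
        norm_num
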